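/- Let (A, m) be a local ring, M a finitely presented nonzero A-module, and N a nonzero A-module with Supp(N) = {m}. Then Hom_A(M, N) ≠ 0. -/

import Mathlib

open CategoryTheory

/-- For a local ring `A`, a finitely presented nonzero module `M`, and a nonzero module
`N` supported on the closed point, `Hom_A(M, N) ≠ 0`. -/
theorem stmt_10 (A : Type) [CommRing A] [IsLocalRing A]
    (M N : Type) [AddCommGroup M] [Module A M] [AddCommGroup N] [Module A N]
    [Module.FinitePresentation A M] [Nontrivial M] [Nontrivial N]
    (hN : Module.support A N = {IsLocalRing.closedPoint A}) :
    Nontrivial (M →ₗ[A] N) := by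
  classical
  obtain ⟨x, hx⟩ := exists_ne (0 : N)
  set I : Ideal A := LinearMap.ker (LinearMap.toSpanSingleton A N x) with hIdef
  have hmemI : ∀ a : A, a ∈ I ↔ a • x = 0 := fun a => by
    simp [hIdef, LinearMap.mem_ker]
  -- the maximal ideal is contained in the radical of I
  have hrad : IsLocalRing.maximalIdeal A ≤ I.radical := by
    intro a ha
    by_contra h
    rw [Ideal.radical_eq_sInf, Submodule.mem_sInf] at h
    push_neg at h
    obtain ⟨p, ⟨hIp, hp⟩, hap⟩ := h
    have hps : (⟨p, hp⟩ : PrimeSpectrum A) ∈ Module.support A N := by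
      rw [Module.mem_support_iff_exists_annihilator]
      refine ⟨x, fun r hr => hIp ?_⟩
      rw [Submodule.mem_annihilator_span_singleton] at hr
      exact (hmemI r).mpr hr
    rw [hN, Set.mem_singleton_iff] at hps
    apply hap
    have : p = IsLocalRing.maximalIdeal A := congrArg PrimeSpectrum.asIdeal hps
    rw [this]; exact ha
  -- minimal generating set
  have hex : ∃ n : ℕ, ∃ s : Finset M, s.card = n ∧ Submodule.span A (s : Set M) = ⊤ := by
    obtain ⟨s, hs⟩ := Module.Finite.fg_top (R := A) (M := M)
    exact ⟨s.card, s, rfl, hs⟩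
  obtain ⟨s, hcard, hspan⟩ := Nat.find_spec hex
  set r := Nat.find hex with hr
  have hsne : s.Nonempty := by
    rw [Finset.nonempty_iff_ne_empty]
    rintro rfl
    simp only [Finset.coe_empty, Submodule.span_empty] at hspan
    exact absurd hspan (by simpa using (Submodule.bot_ne_top (M := M)))
  set π : ({y // y ∈ s} → A) →ₗ[A] M :=
    Fintype.linearCombination A (fun i : {y // y ∈ s} => (i : M)) with hπdef
  have hπsurj : Function.Surjective π := by
    rw [← LinearMap.range_eq_top, hπdef, Fintype.range_linearCombination]
    rw [Subtype.range_coe_subtype]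
    simpa using hspan
  -- every relation has coefficients in the maximal ideal
  have hker : ∀ k ∈ LinearMap.ker π, ∀ i : {y // y ∈ s},
      k i ∈ IsLocalRing.maximalIdeal A := by
    intro k hk i
    by_contra hki
    have hu : IsUnit (k i) := by
      rwa [IsLocalRing.mem_maximalIdeal, mem_nonunits_iff, not_not] at hki
    -- show (i : M) lies in the span of s.erase i
    have hrel : (∑ j, k j • (j : M)) = 0 := by
      rw [LinearMap.mem_ker, hπdef, Fintype.linearCombination_apply] at hk
      exact hk
    have hsplit : k i • (i : M) = -∑ j ∈ Finset.univ.erase i, k j • (j : M) := by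
      rw [eq_neg_iff_add_eq_zero, add_comm, Finset.sum_erase_add _ _ (Finset.mem_univ i)]
      exact hrel
    have hmem : ((i : M)) ∈ Submodule.span A ((s.erase (i : M)) : Set M) := by
      have h1 : (∑ j ∈ Finset.univ.erase i, k j • (j : M)) ∈
          Submodule.span A ((s.erase (i : M)) : Set M) := by
        refine Submodule.sum_mem _ fun j hj => Submodule.smul_mem _ _ (Submodule.subset_span ?_)
        rw [Finset.mem_coe, Finset.mem_erase]
        refine ⟨?_, j.2⟩
        intro hji
        exact (Finset.mem_erase.mp hj).1 (Subtype.ext hji)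
      have h3 : ((hu.unit⁻¹ : Aˣ) : A) • (-∑ j ∈ Finset.univ.erase i, k j • (j : M)) ∈
          Submodule.span A ((s.erase (i : M)) : Set M) :=
        Submodule.smul_mem _ _ (Submodule.neg_mem _ h1)
      rw [← hsplit, smul_smul] at h3
      simp only [IsUnit.val_inv_mul, one_smul] at h3
      exact h3
    have hspan' : Submodule.span A ((s.erase (i : M)) : Set M) = ⊤ := by
      rw [eq_top_iff, ← hspan, Submodule.span_le]
      intro y hy
      rcases eq_or_ne y (i : M) with rfl | hyne
      · exact hmem
      · exact Submodule.subset_span (by rw [Finset.mem_coe, Finset.mem_erase]; exact ⟨hyne, hy⟩)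
    have := Nat.find_min hex (m := r - 1)
      (Nat.sub_lt (hcard ▸ Finset.card_pos.mpr ⟨(i : M), i.2⟩) one_pos)
    exact this ⟨s.erase (i : M), by rw [Finset.card_erase_of_mem i.2, hcard], hspan'⟩
  -- finitely generated kernel
  obtain ⟨T, hT⟩ := Module.FinitePresentation.fg_ker π hπsurj
  -- the ideal of coefficients
  set J : Ideal A := Ideal.span (⋃ k ∈ (T : Set ({y // y ∈ s} → A)), Set.range k) with hJdef
  have hJfg : J.FG :=
    Submodule.fg_span (Set.Finite.biUnion T.finite_toSet fun k _ => Set.finite_range k)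
  have hJrad : J ≤ I.radical := by
    rw [hJdef, Ideal.span_le]
    rintro a ha
    simp only [Set.mem_iUnion, Set.mem_range] at ha
    obtain ⟨k, hkT, i, rfl⟩ := ha
    exact hrad (hker k (hT ▸ Submodule.subset_span hkT) i)
  have hmemJ : ∀ k ∈ T, ∀ i, k i ∈ J := by
    intro k hk i
    exact Ideal.subset_span (Set.mem_biUnion hk ⟨i, rfl⟩)
  obtain ⟨e, he⟩ := Ideal.exists_pow_le_of_le_radical_of_fg hJrad hJfg
  have hex2 : ∃ n : ℕ, J ^ n ≤ I := ⟨e, he⟩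
  set e' := Nat.find hex2 with he'
  have hIne : I ≠ ⊤ := by
    intro h
    apply hx
    have : (1 : A) • x = 0 := (hmemI 1).mp (h ▸ Submodule.mem_top)
    simpa using this
  have he'pos : 0 < e' := by
    rcases Nat.eq_zero_or_pos e' with h | h
    swap
    · exact h
    · exfalso
      have := Nat.find_spec hex2
      rw [← he', h, pow_zero, Ideal.one_eq_top, top_le_iff] at this
      exact hIne this
  have hnotle : ¬ J ^ (e' - 1) ≤ I := Nat.find_min hex2 (Nat.sub_lt he'pos one_pos)
  obtain ⟨c, hcJ, hcI⟩ := SetLike.not_le_iff_exists.mp hnotle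
  have hcmul : ∀ a ∈ J, c * a ∈ I := by
    intro a ha
    have : c * a ∈ J ^ (e' - 1) * J := Ideal.mul_mem_mul hcJ ha
    have h2 : J ^ (e' - 1) * J = J ^ e' := by
      rw [← pow_succ, Nat.sub_add_cancel he'pos]
    rw [h2] at this
    exact Nat.find_spec hex2 this
  -- the linear map
  obtain ⟨i₀⟩ := Finset.Nonempty.to_subtype hsne
  set φ : ({y // y ∈ s} → A) →ₗ[A] N :=
    (LinearMap.toSpanSingleton A N x).comp (c • LinearMap.proj i₀) with hφdef
  have hφapp : ∀ v, φ v = (c * v i₀) • x := fun v => by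
    simp [hφdef, LinearMap.toSpanSingleton_apply, smul_eq_mul]
  have hle : LinearMap.ker π ≤ LinearMap.ker φ := by
    rw [← hT, Submodule.span_le]
    intro k hk
    rw [SetLike.mem_coe, LinearMap.mem_ker, hφapp]
    exact (hmemI _).mp (hcmul _ (hmemJ k hk i₀))
  set q := LinearMap.quotKerEquivOfSurjective π hπsurj with hq
  set ψ : M →ₗ[A] N := (Submodule.liftQ (LinearMap.ker π) φ hle).comp q.symm.toLinearMap
    with hψdef
  refine ⟨ψ, 0, fun h0 => ?_⟩
  have hy : ψ (q (Submodule.Quotient.mk (Pi.single i₀ 1))) = φ (Pi.single i₀ 1) := by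
    rw [hψdef, LinearMap.comp_apply, LinearEquiv.coe_coe, LinearEquiv.symm_apply_apply,
      Submodule.liftQ_apply]
  rw [h0] at hy
  have : φ (Pi.single i₀ 1) = 0 := hy.symm
  rw [hφapp] at this
  simp only [Pi.single_eq_same, mul_one] at this
  exact hcI ((hmemI c).mpr this)
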